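/- Let V : Fin n → Finset α be a vector and suppose EQ(V, i) holds, i.e., there is Q ⊆ Fin n with |Q| ≥ n − f and V(j) = V(i) for all j ∈ Q, where 2f < n. If also EQ(V', i') holds for another vector V' (with quorum Q'), and for all s ∈ Fin n the sets V(s) and V'(s) are comparable under inclusion, then V(i) and V'(i') are comparable under inclusion. -/
import Mathlib

/-- if `EQ(V,i)` and `EQ(V',i')` hold with quorums of size
`≥ n − f`, `2f < n`, and all coordinates of `V` and `V'` are pairwise
comparable, then `V i` and `V' i'` are comparable. -/
theorem stmt15 {α : Type*} {n f : ℕ} (hnf : 2 * f < n)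
    (V V' : Fin n → Finset α) (i i' : Fin n)
    (hEQ : ∃ Q : Finset (Fin n), n - f ≤ Q.card ∧ ∀ j ∈ Q, V j = V i)
    (hEQ' : ∃ Q' : Finset (Fin n), n - f ≤ Q'.card ∧ ∀ j ∈ Q', V' j = V' i')
    (hcomp : ∀ s, V s ⊆ V' s ∨ V' s ⊆ V s) :
    V i ⊆ V' i' ∨ V' i' ⊆ V i := by
  obtain ⟨Q, hQ, hQv⟩ := hEQ
  obtain ⟨Q', hQ', hQv'⟩ := hEQ'
  have hinter : (Q ∩ Q').Nonempty := by
    rw [← Finset.card_pos]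
    have h1 := Finset.card_union_add_card_inter Q Q'
    have h2 : Q.card + Q'.card ≤ n + (Q ∩ Q').card := by
      rw [← h1]
      have := (Q ∪ Q').card_le_univ
      simpa [Finset.card_univ] using Nat.add_le_add_right this ((Q ∩ Q').card)
    omega
  obtain ⟨s, hs⟩ := hinter
  rw [Finset.mem_inter] at hs
  have h1 := hQv s hs.1
  have h2 := hQv' s hs.2
  rcases hcomp s with h | h
  · left; rwa [h1, h2] at h
  · right; rwa [h1, h2] at h
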